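/- Let a, c be integers with 0 ≤ a < c, c ≥ 1, and gcd(a,c) = 1. Then the tetrahedron T_{1,a,c} with vertices (0,0,0), (1,0,0), (0,1,0), (1,a,c) is empty. -/
import Mathlib


/-- A point of `ℝ³` is a lattice point if all of its coordinates are integers. -/
def IsLatticePt (x : Fin 3 → ℝ) : Prop := ∀ i, ∃ m : ℤ, x i = (m : ℝ)

/-- The tetrahedron `T_{a,b,c}`: the convex hull of `(0,0,0)`, `(1,0,0)`, `(0,1,0)`, `(a,b,c)`. -/
def Tet (a b c : ℤ) : Set (Fin 3 → ℝ) :=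
  convexHull ℝ {![0,0,0], ![1,0,0], ![0,1,0], ![(a : ℝ), (b : ℝ), (c : ℝ)]}

/-- `T_{a,b,c}` is an empty lattice tetrahedron: it contains no point of `ℤ³`
other than its four vertices. -/
def TetIsEmpty (a b c : ℤ) : Prop :=
  ∀ x ∈ Tet a b c, IsLatticePt x →
    x = ![0,0,0] ∨ x = ![1,0,0] ∨ x = ![0,1,0] ∨ x = ![(a : ℝ), (b : ℝ), (c : ℝ)]

/-- If `0 ≤ a < c`, `c ≥ 1` and `gcd(a,c) = 1`, then the tetrahedron `T_{1,a,c}` with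
vertices `(0,0,0)`, `(1,0,0)`, `(0,1,0)`, `(1,a,c)` is empty. -/
lemma stmt_11_aux (a c : ℝ) : Convex ℝ
    {y : Fin 3 → ℝ | 0 ≤ y 2 ∧ y 2 ≤ c * y 0 ∧ a * y 2 ≤ c * y 1 ∧
      c * (y 0 + y 1) - a * y 2 ≤ c} := by
  intro u hu v hv p q hp hq hpq
  obtain ⟨hu1, hu2, hu3, hu4⟩ := hu
  obtain ⟨hv1, hv2, hv3, hv4⟩ := hv
  refine ⟨?_, ?_, ?_, ?_⟩ <;>
    simp only [Pi.add_apply, Pi.smul_apply, smul_eq_mul] <;>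
    nlinarith [mul_nonneg hp hu1, mul_nonneg hq hv1,
      mul_le_mul_of_nonneg_left hu2 hp, mul_le_mul_of_nonneg_left hv2 hq,
      mul_le_mul_of_nonneg_left hu3 hp, mul_le_mul_of_nonneg_left hv3 hq,
      mul_le_mul_of_nonneg_left hu4 hp, mul_le_mul_of_nonneg_left hv4 hq]

theorem stmt_11 (a c : ℤ) (ha : 0 ≤ a) (hac : a < c) (hc : 1 ≤ c)
    (hg : Int.gcd a c = 1) :
    TetIsEmpty 1 a c := by
  intro x hx hlat
  have hcR : (1:ℝ) ≤ (c:ℝ) := by exact_mod_cast hc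
  have haR : (0:ℝ) ≤ (a:ℝ) := by exact_mod_cast ha
  have hsub : Tet 1 a c ⊆
      {y : Fin 3 → ℝ | 0 ≤ y 2 ∧ y 2 ≤ (c:ℝ) * y 0 ∧ (a:ℝ) * y 2 ≤ (c:ℝ) * y 1 ∧
        (c:ℝ) * (y 0 + y 1) - (a:ℝ) * y 2 ≤ (c:ℝ)} := by
    apply convexHull_min _ (stmt_11_aux (a:ℝ) (c:ℝ))
    intro p hp
    simp only [Set.mem_insert_iff, Set.mem_singleton_iff] at hp
    rcases hp with rfl | rfl | rfl | rfl <;>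
      refine ⟨?_, ?_, ?_, ?_⟩ <;> simp <;> nlinarith
  obtain ⟨h1, h2, h3, h4⟩ := hsub hx
  obtain ⟨m0, hm0⟩ := hlat 0
  obtain ⟨m1, hm1⟩ := hlat 1
  obtain ⟨m2, hm2⟩ := hlat 2
  simp only [hm0, hm1, hm2] at h1 h2 h3 h4
  have i1 : 0 ≤ m2 := by exact_mod_cast h1
  have i2 : m2 ≤ c * m0 := by exact_mod_cast h2
  have i3 : a * m2 ≤ c * m1 := by exact_mod_cast h3
  have i4 : c * (m0 + m1) - a * m2 ≤ c := by exact_mod_cast h4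
  have hcpos : (0:ℤ) < c := hc
  have hm0nn : 0 ≤ m0 := by nlinarith
  rcases eq_or_lt_of_le hm0nn with h | h
  · -- m0 = 0
    have hm0z : m0 = 0 := h.symm
    have hm2z : m2 = 0 := by nlinarith
    have hm1nn : 0 ≤ m1 := by nlinarith
    have hm1le : m1 ≤ 1 := by nlinarith
    interval_cases m1
    · left
      funext i
      fin_cases i <;> simp [hm0, hm1, hm2, hm0z, hm2z]
    · right; right; left
      funext i
      fin_cases i <;> simp [hm0, hm1, hm2, hm0z, hm2z]
  · -- m0 ≥ 1
    have hm01 : 1 ≤ m0 := h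
    have hcm0 : c ≤ c * m0 := le_mul_of_one_le_right (le_of_lt hcpos) hm01
    have hk : c * m1 - a * m2 = 0 := le_antisymm (by linarith) (by linarith)
    have hcm0' : c * m0 ≤ c * 1 := by linarith
    have hm0e : m0 = 1 := le_antisymm (le_of_mul_le_mul_left hcm0' hcpos) hm01
    have hm2le : m2 ≤ c := by rw [hm0e] at i2; linarith
    have hdvd : c ∣ m2 := by
      have hco : IsCoprime (c : ℤ) (a : ℤ) := by
        rw [Int.isCoprime_iff_gcd_eq_one, Int.gcd_comm]; exact hg
      have h6 : (c:ℤ) ∣ a * m2 := ⟨m1, by linarith⟩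
      exact hco.dvd_of_dvd_mul_left h6
    obtain ⟨d, rfl⟩ := hdvd
    have hd0 : 0 ≤ d := by
      have : c * 0 ≤ c * d := by linarith
      exact le_of_mul_le_mul_left this hcpos
    have hd1 : d ≤ 1 := by
      have : c * d ≤ c * 1 := by linarith
      exact le_of_mul_le_mul_left this hcpos
    interval_cases d
    · have hm1z : m1 = 0 := by
        have h5 : c * m1 = c * 0 := by linarith
        exact mul_left_cancel₀ (ne_of_gt hcpos) h5
      right; left
      funext i
      fin_cases i <;> simp [hm0, hm1, hm2, hm0e, hm1z]
    · have hm1a : m1 = a := by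
        have h5 : c * m1 = c * a := by linarith [hk, mul_comm a c]
        exact mul_left_cancel₀ (ne_of_gt hcpos) h5
      right; right; right
      funext i
      fin_cases i <;> simp [hm0, hm1, hm2, hm0e, hm1a]
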